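/- Let α be a real number with 0 < α < π/4. Define H(α) := {(x,y) ∈ ℝ² : |y| ≤ x·tan α and x² − y² ≤ 1} and H'(α) := {(x,y) ∈ ℝ² : |y| ≤ x·sin(2α) and x² − y² ≤ 1}. Then the polynomial map ψ₁ : ℝ² → ℝ², (x,y) ↦ (x² + y², 2xy), satisfies ψ₁(H(α)) = H'(α). -/

import Mathlib

set_option maxHeartbeats 1000000 in
/-- For `0 < α < π/4`, the polynomial map `ψ₁(x,y) = (x² + y², 2xy)` maps the
hyperbolic sector `H(α) = {|y| ≤ x·tan α, x² − y² ≤ 1}` onto the hyperbolic sector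
`H'(α) = {|y| ≤ x·sin 2α, x² − y² ≤ 1}` of angle `arctan (sin 2α)`. -/
theorem hyperbolic_sector_doubling (α : ℝ) (h0 : 0 < α) (h1 : α < Real.pi / 4) :
    (fun p : ℝ × ℝ => (p.1 ^ 2 + p.2 ^ 2, 2 * p.1 * p.2)) ''
        {p : ℝ × ℝ | |p.2| ≤ p.1 * Real.tan α ∧ p.1 ^ 2 - p.2 ^ 2 ≤ 1} =
      {p : ℝ × ℝ | |p.2| ≤ p.1 * Real.sin (2 * α) ∧ p.1 ^ 2 - p.2 ^ 2 ≤ 1} := by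
  have hπ := Real.pi_pos
  have hc : 0 < Real.cos α := Real.cos_pos_of_mem_Ioo ⟨by linarith, by linarith⟩
  have hs : 0 < Real.sin α := Real.sin_pos_of_pos_of_lt_pi h0 (by linarith)
  have hsc : Real.sin α < Real.cos α := by
    rw [← Real.sin_pi_div_two_sub]
    exact Real.sin_lt_sin_of_lt_of_le_pi_div_two (by linarith) (by linarith) (by linarith)
  have hpyth : Real.sin α ^ 2 + Real.cos α ^ 2 = 1 := Real.sin_sq_add_cos_sq α
  have hsin2 : Real.sin (2 * α) = 2 * Real.sin α * Real.cos α := Real.sin_two_mul α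
  have htan : Real.tan α = Real.sin α / Real.cos α := Real.tan_eq_sin_div_cos α
  set sn := Real.sin α with hsn
  set c := Real.cos α with hcdef
  ext ⟨u, v⟩
  simp only [Set.mem_image, Set.mem_setOf_eq, Prod.mk.injEq, Prod.exists]
  constructor
  · rintro ⟨x, y, ⟨hy, hle⟩, hu, hv⟩
    subst hu; subst hv
    rw [htan] at hy
    have hay : 0 ≤ |y| := abs_nonneg y
    have hx : 0 ≤ x := by nlinarith [div_pos hs hc]
    have hy' : c * |y| ≤ x * sn := by
      rw [← mul_div_assoc, le_div_iff₀ hc] at hy; linarith [mul_comm c |y|]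
    have h2 : 0 ≤ sn * x - c * |y| := by linarith
    have h3 : 0 ≤ c * x - sn * |y| := by nlinarith
    have hyx : y ^ 2 ≤ x ^ 2 := by nlinarith [sq_abs y]
    constructor
    · rw [hsin2]
      have habs : |2 * x * y| = 2 * x * |y| := by
        rw [abs_mul, abs_of_nonneg (by linarith : (0:ℝ) ≤ 2 * x)]
      rw [habs]
      have key : (x ^ 2 + y ^ 2) * (2 * sn * c) - 2 * x * |y| =
          2 * ((sn * x - c * |y|) * (c * x - sn * |y|)) := by
        linear_combination 2 * x * |y| * hpyth - 2 * sn * c * (sq_abs y)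
      nlinarith [mul_nonneg h2 h3]
    · nlinarith
  · rintro ⟨hv, hu⟩
    have hsin2pos : 0 < Real.sin (2 * α) := by rw [hsin2]; positivity
    have hsin2le : Real.sin (2 * α) ≤ 1 := Real.sin_le_one _
    have hva : 0 ≤ |v| := abs_nonneg v
    have hu0 : 0 ≤ u := by nlinarith
    have hvu : |v| ≤ u := by nlinarith
    have hv2 : v ^ 2 ≤ u ^ 2 := by nlinarith [sq_abs v]
    set s := Real.sqrt (u ^ 2 - v ^ 2) with hsdef
    have hs0 : 0 ≤ s := Real.sqrt_nonneg _
    have hs2 : s ^ 2 = u ^ 2 - v ^ 2 := Real.sq_sqrt (by linarith)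
    have hs1 : s ≤ 1 := by
      rw [hsdef]
      calc Real.sqrt (u ^ 2 - v ^ 2) ≤ Real.sqrt 1 := Real.sqrt_le_sqrt (by linarith)
        _ = 1 := Real.sqrt_one
    have hsu : s ≤ u := by nlinarith
    have hcs : u * (c ^ 2 - sn ^ 2) ≤ s := by
      have h1' : v ^ 2 ≤ u ^ 2 * (2 * sn * c) ^ 2 := by
        rw [← hsin2]; nlinarith [sq_abs v, mul_nonneg hu0 hsin2pos.le]
      have hid : u ^ 2 * (c ^ 2 - sn ^ 2) ^ 2 = u ^ 2 - u ^ 2 * (2 * sn * c) ^ 2 := by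
        linear_combination (u ^ 2 * (sn ^ 2 + c ^ 2 + 1)) * hpyth
      have hle' : (u * (c ^ 2 - sn ^ 2)) ^ 2 ≤ s ^ 2 := by
        rw [hs2]; nlinarith [hid, h1']
      have hcsn : 0 ≤ c ^ 2 - sn ^ 2 := by nlinarith
      nlinarith [mul_nonneg hu0 hcsn, hle', hs0]
    rcases eq_or_lt_of_le hu0 with h | hupos
    · have hv0 : v = 0 := abs_eq_zero.mp
        (le_antisymm (by nlinarith) hva)
      exact ⟨0, 0, ⟨by simp, by norm_num⟩, by rw [← h]; norm_num, by rw [hv0]; ring⟩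
    · set x := Real.sqrt ((u + s) / 2) with hxdef
      have hx2 : x ^ 2 = (u + s) / 2 := Real.sq_sqrt (by linarith)
      have hxpos : 0 < x := Real.sqrt_pos.mpr (by linarith)
      have hxne : x ≠ 0 := ne_of_gt hxpos
      set y := v / (2 * x) with hydef
      have h2xy : 2 * x * y = v := by rw [hydef]; field_simp
      have hy2 : y ^ 2 = (u - s) / 2 := by
        rw [hydef]
        rw [div_pow, div_eq_div_iff (by positivity) (by norm_num)]
        linear_combination 2 * hs2 - 4 * (u - s) * hx2
      have hxy2 : x ^ 2 + y ^ 2 = u := by rw [hx2, hy2]; ring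
      refine ⟨x, y, ⟨?_, ?_⟩, hxy2, h2xy⟩
      · have hsq : y ^ 2 ≤ (x * (sn / c)) ^ 2 := by
          have hsp : s * (sn ^ 2 + c ^ 2) = s := by rw [hpyth]; ring
          have h' : (u - s) / 2 * c ^ 2 ≤ (u + s) / 2 * sn ^ 2 := by nlinarith [hcs, hsp]
          have heq : (x * (sn / c)) ^ 2 = ((u + s) / 2 * sn ^ 2) / c ^ 2 := by
            rw [mul_pow, div_pow, hx2]; ring
          rw [heq, hy2, le_div_iff₀ (by positivity)]
          exact h'
        have h := Real.sqrt_le_sqrt hsq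
        rw [Real.sqrt_sq_eq_abs,
          Real.sqrt_sq (mul_nonneg hxpos.le (div_nonneg hs.le hc.le))] at h
        rw [htan]; exact h
      · rw [hx2, hy2]; linarith
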